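/- Let f be monotone submodular with f(∅)=0 on the disjoint union T = T₁ ⊔ … ⊔ T_n. Suppose S = ⊔ᵢ Sᵢ is subset-stable with respect to contract α (i.e., for each i and S'_i ⊆ S_i, αᵢ·f(Sᵢ ⊔ S₋ᵢ) - c(Sᵢ) ≥ αᵢ·f(S'_i ⊔ S₋ᵢ) - c(S'_i)), and S_i = ∅ whenever αᵢ = 0. Then every Nash equilibrium S† of the contract 2α satisfies f(S†) ≥ (1/2)·f(S). -/

import Mathlib

private lemma lemA {T : Type*} [DecidableEq T] {ι : Type*} [DecidableEq ι]
    (f : Finset T → ℝ)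
    (hmono : ∀ A B : Finset T, A ⊆ B → f A ≤ f B)
    (hsubmod : ∀ A B : Finset T, f (A ∪ B) + f (A ∩ B) ≤ f A + f B)
    (s : Finset ι) (A : ι → Finset T) (B : Finset T) :
    f (B ∪ s.biUnion A) - f B ≤ ∑ i ∈ s, (f (B ∪ A i) - f B) := by
  induction s using Finset.induction_on with
  | empty => simp
  | @insert k s hk ih =>
    rw [Finset.biUnion_insert, Finset.sum_insert hk]
    have h1 := hsubmod (B ∪ A k) (B ∪ s.biUnion A)
    have h2 : f B ≤ f ((B ∪ A k) ∩ (B ∪ s.biUnion A)) := by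
      apply hmono; intro x hx; simp [Finset.mem_inter, hx]
    have h3 : B ∪ (A k ∪ s.biUnion A) = (B ∪ A k) ∪ (B ∪ s.biUnion A) := by
      ext x; simp [or_assoc]; tauto
    rw [h3]
    linarith

private lemma lemB {T : Type*} [DecidableEq T] {ι : Type*} [DecidableEq ι]
    (f : Finset T → ℝ)
    (hsubmod : ∀ A B : Finset T, f (A ∪ B) + f (A ∩ B) ≤ f A + f B)
    (s : Finset ι) (A : ι → Finset T) (U : Finset T)
    (hdisj : ∀ i ∈ s, ∀ j ∈ s, i ≠ j → Disjoint (A i) (A j)) :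
    ∑ i ∈ s, (f U - f (U \ A i)) ≤ f U - f (U \ s.biUnion A) := by
  induction s using Finset.induction_on with
  | empty => simp
  | @insert k s hk ih =>
    rw [Finset.biUnion_insert, Finset.sum_insert hk]
    have hd : Disjoint (A k) (s.biUnion A) := by
      rw [Finset.disjoint_biUnion_right]
      intro j hj
      exact hdisj k (Finset.mem_insert_self k s) j (Finset.mem_insert_of_mem hj)
        (fun h => hk (h ▸ hj))
    have ih' := ih (fun i hi j hj hij =>
      hdisj i (Finset.mem_insert_of_mem hi) j (Finset.mem_insert_of_mem hj) hij)
    have h1 := hsubmod (U \ A k) (U \ s.biUnion A)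
    have hu : (U \ A k) ∪ (U \ s.biUnion A) = U := by
      ext x
      simp only [Finset.mem_union, Finset.mem_sdiff]
      constructor
      · rintro (⟨h, _⟩ | ⟨h, _⟩) <;> exact h
      · intro hx
        by_cases hxa : x ∈ A k
        · right; exact ⟨hx, fun hxb => (Finset.disjoint_left.mp hd) hxa hxb⟩
        · left; exact ⟨hx, hxa⟩
    have hi : (U \ A k) ∩ (U \ s.biUnion A) = U \ (A k ∪ s.biUnion A) := by
      ext x; simp only [Finset.mem_inter, Finset.mem_sdiff, Finset.mem_union]; tauto
    rw [hu, hi] at h1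
    linarith

theorem stmt_13 {n : ℕ} {T : Type*} [Fintype T] [DecidableEq T]
    (own : T → Fin n) (f : Finset T → ℝ) (c : T → ℝ)
    (hmono : ∀ A B : Finset T, A ⊆ B → f A ≤ f B)
    (hsubmod : ∀ A B : Finset T, f (A ∪ B) + f (A ∩ B) ≤ f A + f B)
    (hempty : f ∅ = 0)
    (hrange : ∀ A : Finset T, 0 ≤ f A ∧ f A ≤ 1)
    (hc : ∀ j, 0 ≤ c j)
    (α : Fin n → ℝ) (hα : ∀ i, 0 ≤ α i ∧ α i ≤ 1)
    (S : Fin n → Finset T) (hSown : ∀ i, ∀ j ∈ S i, own j = i)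
    (hstable : ∀ i : Fin n, ∀ S' ⊆ S i,
      α i * f (Finset.univ.biUnion S) - ∑ j ∈ S i, c j ≥
        α i * f (Finset.univ.biUnion (Function.update S i S')) - ∑ j ∈ S', c j)
    (hzero : ∀ i, α i = 0 → S i = ∅)
    (Sd : Fin n → Finset T) (hSdown : ∀ i, ∀ j ∈ Sd i, own j = i)
    (hNE : ∀ i : Fin n, ∀ S' : Finset T, (∀ j ∈ S', own j = i) →
      (2 * α i) * f (Finset.univ.biUnion Sd) - ∑ j ∈ Sd i, c j ≥
        (2 * α i) * f (Finset.univ.biUnion (Function.update Sd i S')) - ∑ j ∈ S', c j) :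
    f (Finset.univ.biUnion Sd) ≥ (1 / 2) * f (Finset.univ.biUnion S) := by
  set U := Finset.univ.biUnion S with hU
  set D := Finset.univ.biUnion Sd with hD
  -- disjointness of the S i
  have hSdisj : ∀ i ∈ (Finset.univ : Finset (Fin n)), ∀ j ∈ (Finset.univ : Finset (Fin n)),
      i ≠ j → Disjoint (S i) (S j) := by
    intro i _ j _ hij
    rw [Finset.disjoint_left]
    intro x hxi hxj
    exact hij ((hSown i x hxi) ▸ (hSown j x hxj) ▸ rfl)
  -- key per-agent inequality
  have key : ∀ i : Fin n, 2 * (f (D ∪ S i) - f D) ≤ f U - f (U \ S i) := by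
    intro i
    by_cases h0 : α i = 0
    · have hSi := hzero i h0
      simp [hSi, hempty]
    · have hαpos : 0 < α i := lt_of_le_of_ne (hα i).1 (Ne.symm h0)
      -- NE deviation to Sd i ∪ S i
      have hown' : ∀ j ∈ Sd i ∪ S i, own j = i := by
        intro j hj
        rcases Finset.mem_union.mp hj with h | h
        · exact hSdown i j h
        · exact hSown i j h
      have hNE' := hNE i (Sd i ∪ S i) hown'
      have hup : Finset.univ.biUnion (Function.update Sd i (Sd i ∪ S i)) = D ∪ S i := by
        ext x
        simp only [Finset.mem_biUnion, Finset.mem_univ, true_and, Finset.mem_union, hD]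
        constructor
        · rintro ⟨k, hk⟩
          by_cases hki : k = i
          · rw [hki, Function.update_self] at hk
            rcases Finset.mem_union.mp hk with h | h
            · exact Or.inl ⟨i, h⟩
            · exact Or.inr h
          · rw [Function.update_of_ne hki] at hk; exact Or.inl ⟨k, hk⟩
        · rintro (⟨k, hk⟩ | h)
          · by_cases hki : k = i
            · rw [hki] at hk
              exact ⟨i, by rw [Function.update_self]; exact Finset.mem_union_left _ hk⟩
            · exact ⟨k, by rw [Function.update_of_ne hki]; exact hk⟩
          · exact ⟨i, by rw [Function.update_self]; exact Finset.mem_union_right _ h⟩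
      rw [hup] at hNE'
      have hsum : ∑ j ∈ Sd i ∪ S i, c j ≤ ∑ j ∈ Sd i, c j + ∑ j ∈ S i, c j := by
        have := Finset.sum_union_inter (s₁ := Sd i) (s₂ := S i) (f := c)
        have hnn : 0 ≤ ∑ j ∈ Sd i ∩ S i, c j := Finset.sum_nonneg (fun j _ => hc j)
        linarith
      have step1 : 2 * α i * (f (D ∪ S i) - f D) ≤ ∑ j ∈ S i, c j := by
        nlinarith [hNE']
      -- stability deviation to ∅
      have hst := hstable i ∅ (Finset.empty_subset _)
      have hup2 : Finset.univ.biUnion (Function.update S i ∅) = U \ S i := by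
        ext x
        simp only [Finset.mem_biUnion, Finset.mem_univ, true_and, Finset.mem_sdiff, hU]
        constructor
        · rintro ⟨k, hk⟩
          by_cases hki : k = i
          · rw [hki, Function.update_self] at hk; exact absurd hk (Finset.notMem_empty x)
          · rw [Function.update_of_ne hki] at hk
            exact ⟨⟨k, hk⟩, fun hx => hki ((hSown k x hk) ▸ (hSown i x hx) ▸ rfl)⟩
        · rintro ⟨⟨k, hk⟩, hxi⟩
          have hki : k ≠ i := fun h => hxi (h ▸ hk)
          exact ⟨k, by rw [Function.update_of_ne hki]; exact hk⟩
      rw [hup2] at hst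
      simp only [Finset.sum_empty] at hst
      have step2 : ∑ j ∈ S i, c j ≤ α i * (f U - f (U \ S i)) := by linarith
      have : 2 * α i * (f (D ∪ S i) - f D) ≤ α i * (f U - f (U \ S i)) :=
        le_trans step1 step2
      nlinarith
  -- sum it all up
  have hsumkey : ∑ i : Fin n, (2 * (f (D ∪ S i) - f D)) ≤ ∑ i : Fin n, (f U - f (U \ S i)) :=
    Finset.sum_le_sum (fun i _ => key i)
  have hA := lemA f hmono hsubmod Finset.univ S D
  have hB := lemB f hsubmod Finset.univ S U hSdisj
  rw [← hU] at hB hA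
  have hUU : U \ U = (∅ : Finset T) := Finset.sdiff_self U
  rw [hUU, hempty] at hB
  have hmul : 2 * (f (D ∪ U) - f D) ≤ ∑ i : Fin n, (2 * (f (D ∪ S i) - f D)) := by
    rw [← Finset.mul_sum]
    linarith
  have hUD : f U ≤ f (D ∪ U) := hmono U (D ∪ U) (Finset.subset_union_right)
  linarith
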